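/- Let P be a finite 2-group such that P/Z(P) is elementary abelian, and let B be a subgroup of Aut(P) of odd order such that every element of B fixes Ω_2(P) pointwise. Then B is the trivial subgroup. Equivalently, every automorphism of P of odd order which fixes every element of P of order dividing 4 is the identity. -/

import Mathlib

private lemma aux_key (P : Type) [Group P] [Finite P] (hP : IsPGroup 2 P)
    (hab : ∀ a b : P ⧸ Subgroup.center P, a * b = b * a)
    (hexp : ∀ a : P ⧸ Subgroup.center P, a ^ 2 = 1)
    (φ : MulAut P) (hodd : Odd (orderOf φ))
    (hfix4 : ∀ x : P, x ^ 4 = 1 → φ x = x) : ∀ x : P, φ x = x := by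
  -- squares are central
  have hz : ∀ x : P, x ^ 2 ∈ Subgroup.center P := by
    intro x
    rw [← QuotientGroup.eq_one_iff]
    have h := hexp (x : P ⧸ Subgroup.center P)
    simpa using h
  -- commutators are central
  have hcom : ∀ x y : P, x⁻¹ * y⁻¹ * x * y ∈ Subgroup.center P := by
    intro x y
    rw [← QuotientGroup.eq_one_iff]
    have h := hab (x : P ⧸ Subgroup.center P) (y : P ⧸ Subgroup.center P)
    have : ((x⁻¹ * y⁻¹ * x * y : P) : P ⧸ Subgroup.center P)
        = (x : P ⧸ Subgroup.center P)⁻¹ * (y : P ⧸ Subgroup.center P)⁻¹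
          * (x : P ⧸ Subgroup.center P) * (y : P ⧸ Subgroup.center P) := rfl
    rw [this]
    calc (x : P ⧸ Subgroup.center P)⁻¹ * (y : P ⧸ Subgroup.center P)⁻¹
          * (x : P ⧸ Subgroup.center P) * (y : P ⧸ Subgroup.center P)
        = (x : P ⧸ Subgroup.center P)⁻¹ * ((y : P ⧸ Subgroup.center P)⁻¹
          * ((x : P ⧸ Subgroup.center P) * (y : P ⧸ Subgroup.center P))) := by group
      _ = (x : P ⧸ Subgroup.center P)⁻¹ * ((y : P ⧸ Subgroup.center P)⁻¹
          * ((y : P ⧸ Subgroup.center P) * (x : P ⧸ Subgroup.center P))) := by rw [h]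
      _ = 1 := by group
  -- main induction on a bound of the order
  have main : ∀ n : ℕ, ∀ x : P, orderOf x ≤ n → φ x = x := by
    intro n
    induction n with
    | zero =>
      intro x hx
      have := orderOf_pos x
      omega
    | succ n ih =>
      intro x hx
      obtain ⟨k, hk⟩ := hP x
      have hdvd : orderOf x ∣ 2 ^ k := orderOf_dvd_of_pow_eq_one hk
      obtain ⟨m, _, hm⟩ := (Nat.dvd_prime_pow Nat.prime_two).mp hdvd
      by_cases hm2 : m ≤ 2
      · apply hfix4
        have : orderOf x ∣ 4 := by
          rw [hm]
          calc (2:ℕ) ^ m ∣ 2 ^ 2 := pow_dvd_pow 2 hm2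
            _ = 4 := by norm_num
        exact orderOf_dvd_iff_pow_eq_one.mp this
      · -- order of x^2 is smaller
        have hm3 : 3 ≤ m := by omega
        have hsqord : orderOf (x ^ 2) ∣ 2 ^ (m - 1) := by
          apply orderOf_dvd_of_pow_eq_one
          rw [← pow_mul]
          have : 2 * 2 ^ (m - 1) = 2 ^ m := by
            rw [← pow_succ']
            congr 1
            omega
          rw [this, ← hm]
          exact pow_orderOf_eq_one x
        have hlt : orderOf (x ^ 2) ≤ n := by
          have h1 : orderOf (x ^ 2) ≤ 2 ^ (m - 1) :=
            Nat.le_of_dvd (Nat.pow_pos (by norm_num)) hsqord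
          have h2 : 2 ^ (m - 1) < 2 ^ m := Nat.pow_lt_pow_right (by norm_num) (by omega)
          omega
        have hsq2 : φ (x ^ 2) = x ^ 2 := ih (x ^ 2) hlt
        set c := x⁻¹ * φ x with hc_def
        set d := c⁻¹ * x⁻¹ * c * x with hd_def
        have hdcen : ∀ g : P, g * d = d * g := Subgroup.mem_center_iff.mp (hcom c x)
        have hx2cen : ∀ g : P, g * x ^ 2 = x ^ 2 * g := Subgroup.mem_center_iff.mp (hz x)
        have hphix : φ x = x * c := by rw [hc_def]; group
        have hxcx : x⁻¹ * c * x = c * d := by rw [hd_def]; group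
        have hA : c⁻¹ * (x ^ 2)⁻¹ * c * x ^ 2 = 1 := by
          calc c⁻¹ * (x ^ 2)⁻¹ * c * x ^ 2
              = c⁻¹ * (x ^ 2)⁻¹ * (c * x ^ 2) := by group
            _ = c⁻¹ * (x ^ 2)⁻¹ * (x ^ 2 * c) := by rw [hx2cen c]
            _ = 1 := by group
        have hd2 : d * d = 1 := by
          calc d * d = (c⁻¹ * x⁻¹ * c * x) * d := by rw [← hd_def]
            _ = c⁻¹ * x⁻¹ * c * (x * d) := by group
            _ = c⁻¹ * x⁻¹ * c * (d * x) := by rw [hdcen x]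
            _ = c⁻¹ * x⁻¹ * (c * d) * x := by group
            _ = c⁻¹ * x⁻¹ * (x⁻¹ * c * x) * x := by rw [hxcx]
            _ = c⁻¹ * (x ^ 2)⁻¹ * c * x ^ 2 := by simp only [pow_two]; group
            _ = 1 := hA
        have hsqx : (x * c) ^ 2 = x ^ 2 := by
          rw [← hphix, ← map_pow]; exact hsq2
        have hexpand : (x * c) ^ 2 = x ^ 2 * (c * c * d) := by
          have h5 : c * x = x * (c * d) := by
            rw [hd_def]; group
          calc (x * c) ^ 2 = x * (c * x) * c := by simp only [pow_two]; group
            _ = x * (x * (c * d)) * c := by rw [h5]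
            _ = x ^ 2 * (c * (d * c)) := by simp only [pow_two]; group
            _ = x ^ 2 * (c * (c * d)) := by rw [← hdcen c]
            _ = x ^ 2 * (c * c * d) := by group
        have hccd : c * c * d = 1 := by
          have h6 : x ^ 2 * (c * c * d) = x ^ 2 * 1 := by
            rw [mul_one, ← hexpand, hsqx]
          exact mul_left_cancel h6
        have hcc : c * c = d⁻¹ := by
          rw [eq_inv_iff_mul_eq_one]; exact hccd
        have hc4 : c ^ 4 = 1 := by
          have h8 : c ^ 4 = (c * c) * (c * c) := by
            simp only [pow_succ, pow_zero, one_mul, mul_assoc]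
          rw [h8, hcc, ← mul_inv_rev, hd2, inv_one]
        have hφc : φ c = c := hfix4 c hc4
        have hφjc : ∀ j : ℕ, (φ ^ j) c = c := by
          intro j
          induction j with
          | zero => rfl
          | succ j ihj => rw [pow_succ, MulAut.mul_apply, hφc, ihj]
        have hiter : ∀ j : ℕ, (φ ^ j) x = x * c ^ j := by
          intro j
          induction j with
          | zero => simp
          | succ j ihj =>
            rw [pow_succ, MulAut.mul_apply, hphix, map_mul, hφjc j, ihj, pow_succ,
              mul_assoc]
        have hcn : c ^ orderOf φ = 1 := by
          have h7 : x * c ^ orderOf φ = x * 1 := by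
            rw [mul_one, ← hiter (orderOf φ), pow_orderOf_eq_one φ]
            rfl
          exact mul_left_cancel h7
        have hdvd1 : orderOf c ∣ orderOf φ := orderOf_dvd_of_pow_eq_one hcn
        have hdvd2 : orderOf c ∣ 4 := orderOf_dvd_of_pow_eq_one hc4
        have hcop : Nat.Coprime (orderOf φ) 4 := by
          have h2 : Nat.Coprime (orderOf φ) 2 := by
            rw [Nat.coprime_two_right]; exact hodd
          have : (4 : ℕ) = 2 ^ 2 := by norm_num
          rw [this]
          exact h2.pow_right 2
        have hc1 : orderOf c = 1 := by
          have := Nat.dvd_gcd hdvd1 hdvd2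
          rwa [Nat.Coprime.gcd_eq_one hcop, Nat.dvd_one] at this
        have : c = 1 := orderOf_eq_one_iff.mp hc1
        rw [hphix, this, mul_one]
  intro x
  exact main (orderOf x) x le_rfl

/-- **Odd-order automorphisms are detected on `Ω₂(P)`.** Let `P` be a finite `2`-group
with `P/Z(P)` elementary abelian. Any odd-order subgroup `B` of `Aut(P)` fixing
`Ω₂(P)` pointwise is trivial; equivalently, every odd-order automorphism of `P`
fixing all elements of order dividing `4` is the identity. -/
theorem odd_automorphism_detected_on_omega_two
    (P : Type) [Group P] [Finite P] (hP : IsPGroup 2 P)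
    (hab : ∀ a b : P ⧸ Subgroup.center P, a * b = b * a)
    (hexp : ∀ a : P ⧸ Subgroup.center P, a ^ 2 = 1)
    (B : Subgroup (MulAut P)) (hodd : Odd (Nat.card B))
    (hfix : ∀ φ ∈ B, ∀ x ∈ Subgroup.closure {y : P | y ^ 4 = 1}, φ x = x) :
    B = ⊥ ∧
      ∀ φ : MulAut P, Odd (orderOf φ) → (∀ x : P, x ^ 4 = 1 → φ x = x) → φ = 1 := by
  constructor
  · rw [Subgroup.eq_bot_iff_forall]
    intro φ hφ
    have hdvd : orderOf φ ∣ Nat.card B := by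
      rw [← Subgroup.orderOf_mk φ hφ]
      exact orderOf_dvd_natCard _
    have hoddφ : Odd (orderOf φ) := by
      rw [← Nat.not_even_iff_odd] at hodd ⊢
      intro he
      exact hodd ((even_iff_two_dvd.mp he).trans hdvd |> even_iff_two_dvd.mpr)
    have hf4 : ∀ x : P, x ^ 4 = 1 → φ x = x := by
      intro x hx
      exact hfix φ hφ x (Subgroup.subset_closure hx)
    exact MulEquiv.ext fun x =>
      (aux_key P hP hab hexp φ hoddφ hf4 x).trans rfl
  · intro φ hφodd hφfix
    exact MulEquiv.ext fun x =>
      (aux_key P hP hab hexp φ hφodd hφfix x).trans rfl
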